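/- Assume the discrete continuity constraint holds at node i. Then the nodal energy production admits the exact flux decomposition ⟪u i, RHS i⟫ = Σ_{j ≠ i} (F i j + G i j), where F is the numerical energy flux and G i j = -(dadd i j / 2)·‖u j - u i‖² - (dp i j / 2)·(p j - p i)² collects the symmetric dissipative terms. (No sign assumptions on dadd or dp are needed.) -/

import Mathlib

open scoped RealInnerProductSpace BigOperators

/-- Exact nodal energy flux decomposition: under the discrete continuity
constraint at node `i`, `⟪u i, RHS i⟫ = Σ_{j ≠ i} (F i j + G i j)`. -/
theorem nodal_energy_flux_decomposition
    (d N : ℕ) (hd : 1 ≤ d) (hN : 1 ≤ N)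
    (u : Fin N → EuclideanSpace ℝ (Fin d)) (p : Fin N → ℝ)
    (c : Fin N → Fin N → EuclideanSpace ℝ (Fin d))
    (hc : ∀ i j, c j i = -c i j)
    (atil dadd dp F G : Fin N → Fin N → ℝ)
    (hatil : ∀ i j, atil i j = ⟪((1 : ℝ) / 2) • (u j + u i), c i j⟫)
    (hdadd_symm : ∀ i j, dadd i j = dadd j i)
    (hdp_symm : ∀ i j, dp i j = dp j i)
    (hF : ∀ i j, i ≠ j → F i j =
      (atil i j / 2) * ‖u j - u i‖ ^ 2
      + (1 / 2) * ⟪c i j, u j - u i⟫ * (p j - p i)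
      - ⟪((1 : ℝ) / 2) • (u j + u i), c i j⟫
          * (‖u j‖ ^ 2 / 2 + p j + ‖u i‖ ^ 2 / 2 + p i)
      + dadd i j * (‖u j‖ ^ 2 / 2 - ‖u i‖ ^ 2 / 2)
      + dp i j * (p j ^ 2 / 2 - p i ^ 2 / 2))
    (hG : ∀ i j, i ≠ j → G i j =
      -(dadd i j / 2) * ‖u j - u i‖ ^ 2 - (dp i j / 2) * (p j - p i) ^ 2)
    (RHS : Fin N → EuclideanSpace ℝ (Fin d))
    (hRHS : ∀ i, RHS i =
      (∑ j ∈ Finset.univ.erase i,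
        ((dadd i j - atil i j) • (u j - u i) - (p j - p i) • c i j))
      - (∑ j ∈ Finset.univ.erase i, atil i j) • u i)
    (i : Fin N)
    (hcont : ∑ j ∈ Finset.univ.erase i,
      (dp i j * (p j - p i) - ⟪u j + u i, c i j⟫) = 0) :
    ⟪u i, RHS i⟫ = ∑ j ∈ Finset.univ.erase i, (F i j + G i j) := by
  have key : ∀ j ∈ Finset.univ.erase i,
      F i j + G i j =
        (⟪u i, (dadd i j - atil i j) • (u j - u i) - (p j - p i) • c i j⟫
          - atil i j * ⟪u i, u i⟫)
        + p i * (dp i j * (p j - p i) - ⟪u j + u i, c i j⟫) := by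
    intro j hj
    have hij : i ≠ j := (Finset.ne_of_mem_erase hj).symm
    rw [hF i j hij, hG i j hij, hatil i j]
    simp only [inner_sub_right, inner_sub_left, inner_add_left, inner_add_right,
      real_inner_smul_left, real_inner_smul_right, norm_sub_sq_real,
      real_inner_self_eq_norm_sq]
    rw [real_inner_comm (u j) (u i), real_inner_comm (c i j) (u j),
      real_inner_comm (c i j) (u i)]
    ring
  rw [Finset.sum_congr rfl key, Finset.sum_add_distrib, ← Finset.mul_sum, hcont,
    mul_zero, add_zero, hRHS i, inner_sub_right, inner_sum, real_inner_smul_right,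
    Finset.sum_mul, Finset.sum_sub_distrib]
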